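/- In a liquid democracy election with unit weights, a distant agent is a dummy: if agent i has a guru d*(i) = g and the delegation distance from i to g (number of intermediaries plus one, counting g) is at least β, then DB_i(V) = 0. -/

import Mathlib

open Finset

/-- The Banzhaf index of player `i` in the simple game `ν` on the finite player set `α`. -/
def banzhaf {α : Type*} [Fintype α] [DecidableEq α] (ν : Finset α → ℤ) (i : α) : ℚ :=
  (∑ C ∈ (Finset.univ.erase i).powerset, ((ν (insert i C) - ν C : ℤ) : ℚ)) /
    2 ^ (Fintype.card α - 1)

/-- `LinkedIn d C a g` : agent `a` is linked to the guru `g` (a fixed point of the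
delegation map `d`) by a delegation chain all of whose members lie in `C`.
`d a = none` represents abstention. -/
inductive LinkedIn {α : Type*} (d : α → Option α) (C : Finset α) : α → α → Prop
  | guru {a : α} : a ∈ C → d a = some a → LinkedIn d C a a
  | step {a b g : α} : a ∈ C → d a = some b → a ≠ b → LinkedIn d C b g → LinkedIn d C a g

/-- `hatD d C` : the set of agents that directly or indirectly delegate to some guru
in `C` through a delegation chain wholly contained in `C`. -/
noncomputable def hatD {α : Type*} [Fintype α] (d : α → Option α) (C : Finset α) :
    Finset α :=
  @Finset.filter _ (fun a => ∃ g, LinkedIn d C a g) (Classical.decPred _) Finset.univ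

open Classical in
/-- The delegative simple game of the liquid democracy election `(N, ω, d, β)`:
a coalition `C` wins iff the weight accrued by its gurus from within `C` meets the
quota `β`. -/
noncomputable def nuD {α : Type*} [Fintype α] (ω : α → ℝ) (β : ℝ) (d : α → Option α)
    (C : Finset α) : ℤ :=
  if β ≤ ∑ a ∈ hatD d C, ω a then 1 else 0

/-- The delegative Banzhaf index of agent `i` in the liquid democracy election
`(N, ω, d, β)`. -/
noncomputable def DB {α : Type*} [Fintype α] [DecidableEq α] (ω : α → ℝ) (β : ℝ)
    (d : α → Option α) (i : α) : ℚ :=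
  banzhaf (nuD ω β d) i

/-- `ChainList d a l g` : the delegation chain from `a` reaches the guru `g`, and
`l` is the list of agents strictly after `a` on the chain (the intermediaries
followed by `g` itself); thus `l.length` is the delegation distance from `a` to `g`
under unit weights. -/
inductive ChainList {α : Type*} (d : α → Option α) : α → List α → α → Prop
  | guru {g : α} : d g = some g → ChainList d g [] g
  | step {a b g : α} {l : List α} : d a = some b → a ≠ b → ChainList d b l g →
      ChainList d a (b :: l) g


section Aux
variable {α : Type*}

theorem chainlist_unique {d : α → Option α} {a : α} {l l' : List α} {g g' : α}
    (h : ChainList d a l g) (h' : ChainList d a l' g') : l = l' ∧ g = g' := by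
  induction h generalizing l' with
  | guru hg =>
    cases h' with
    | guru => exact ⟨rfl, rfl⟩
    | step hd hne _ => rw [hg] at hd; exact absurd (Option.some.inj hd) hne
  | step hd hne _ ih =>
    cases h' with
    | guru hg' => rw [hg'] at hd; exact absurd (Option.some.inj hd) hne
    | step hd' hne' hc' =>
      rw [hd] at hd'
      cases Option.some.inj hd'
      obtain ⟨e1, e2⟩ := ih hc'
      exact ⟨by rw [e1], e2⟩

theorem chainlist_suffix {d : α → Option α} {a x : α} {l : List α} {g : α}
    (h : ChainList d a l g) (hx : x ∈ l) :
    ∃ lx, ChainList d x lx g ∧ lx.length < l.length ∧ ∀ y ∈ lx, y ∈ l := by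
  induction h with
  | guru => simp at hx
  | step hd hne hc ih =>
    rcases List.mem_cons.1 hx with rfl | hx
    · exact ⟨_, hc, by simp, fun y hy => List.mem_cons_of_mem _ hy⟩
    · obtain ⟨lx, h1, h2, h3⟩ := ih hx
      exact ⟨lx, h1, Nat.lt_succ_of_lt h2, fun y hy => List.mem_cons_of_mem _ (h3 y hy)⟩

theorem chainlist_not_mem {d : α → Option α} {a : α} {l : List α} {g : α}
    (h : ChainList d a l g) : a ∉ l := by
  intro hal
  obtain ⟨lx, h1, h2, _⟩ := chainlist_suffix h hal
  obtain ⟨e, _⟩ := chainlist_unique h1 h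
  subst e; exact lt_irrefl _ h2

theorem chainlist_nodup {d : α → Option α} {a : α} {l : List α} {g : α}
    (h : ChainList d a l g) : l.Nodup := by
  induction h with
  | guru => exact List.nodup_nil
  | step hd hne hc ih => exact List.nodup_cons.2 ⟨chainlist_not_mem hc, ih⟩

theorem linked_of_chain [Fintype α] {d : α → Option α} {C : Finset α} {a : α}
    {l : List α} {g : α} (h : ChainList d a l g) (ha : a ∈ C)
    (hl : ∀ y ∈ l, y ∈ C) : LinkedIn d C a g := by
  induction h with
  | guru hg => exact LinkedIn.guru ha hg
  | step hd hne hc ih =>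
    exact LinkedIn.step ha hd hne (ih (hl _ List.mem_cons_self)
      (fun y hy => hl y (List.mem_cons_of_mem _ hy)))

theorem linked_mem {d : α → Option α} {C : Finset α} {a g : α}
    (h : LinkedIn d C a g) : a ∈ C := by
  cases h with
  | guru h _ => exact h
  | step h _ _ _ => exact h

theorem chain_of_linked {d : α → Option α} {C : Finset α} {a : α}
    {l : List α} {g g' : α} (h : LinkedIn d C a g') (hc : ChainList d a l g) :
    g' = g ∧ ∀ y ∈ l, y ∈ C := by
  induction h generalizing l with
  | guru haC hda =>
    cases hc with
    | guru => exact ⟨rfl, by simp⟩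
    | step hd hne _ => rw [hda] at hd; exact absurd (Option.some.inj hd) hne
  | step haC hd hne hlink ih =>
    cases hc with
    | guru hg => rw [hg] at hd; exact absurd (Option.some.inj hd) hne
    | step hd' hne' hc' =>
      rw [hd] at hd'
      cases Option.some.inj hd'
      obtain ⟨e1, e2⟩ := ih hc'
      exact ⟨e1, by
        intro y hy
        rcases List.mem_cons.1 hy with rfl | hy
        · exact linked_mem hlink
        · exact e2 y hy⟩

end Aux

theorem mem_hatD [Fintype α] {d : α → Option α} {C : Finset α} {a : α} :
    a ∈ hatD d C ↔ ∃ g, LinkedIn d C a g := by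
  simp [hatD]

theorem linkedIn_mono [Fintype α] {d : α → Option α} {C C' : Finset α} {a g : α}
    (hcc : C ⊆ C') (h : LinkedIn d C a g) : LinkedIn d C' a g := by
  induction h with
  | guru haC hda => exact LinkedIn.guru (hcc haC) hda
  | step haC hd hne hl ih => exact LinkedIn.step (hcc haC) hd hne ih

theorem linked_of_not_i [Fintype α] [DecidableEq α] {d : α → Option α} {C : Finset α}
    {i a g : α} (hni : ∀ g', ¬ LinkedIn d (insert i C) i g')
    (h : LinkedIn d (insert i C) a g) : LinkedIn d C a g := by
  induction h with
  | guru haC hda =>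
    rcases Finset.mem_insert.1 haC with rfl | h
    · exact absurd (LinkedIn.guru haC hda) (hni _)
    · exact LinkedIn.guru h hda
  | step haC hd hne hl ih =>
    rcases Finset.mem_insert.1 haC with rfl | h
    · exact absurd (LinkedIn.step haC hd hne hl) (hni _)
    · exact LinkedIn.step h hd hne ih

theorem nuD_insert_eq [Fintype α] [DecidableEq α] {β : ℝ} {d : α → Option α} {i g : α}
    {l : List α} (hchain : ChainList d i l g) (hdist : β ≤ (l.length : ℝ)) (C : Finset α) :
    nuD (fun _ => (1 : ℝ)) β d (insert i C) = nuD (fun _ => (1 : ℝ)) β d C := by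
  have h1 : (β ≤ ∑ a ∈ hatD d (insert i C), (1 : ℝ)) ↔ β ≤ ∑ a ∈ hatD d C, (1 : ℝ) := by
    simp only [Finset.sum_const, nsmul_eq_mul, mul_one]
    constructor
    · intro hw
      by_cases hi : ∃ g', LinkedIn d (insert i C) i g'
      · obtain ⟨g', hg'⟩ := hi
        obtain ⟨rfl, hlC⟩ := chain_of_linked hg' hchain
        have hil := chainlist_not_mem hchain
        have hlC' : ∀ y ∈ l, y ∈ C := fun y hy =>
          (Finset.mem_insert.1 (hlC y hy)).resolve_left (fun h => hil (h ▸ hy))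
        have hsub : l.toFinset ⊆ hatD d C := by
          intro x hx
          rw [List.mem_toFinset] at hx
          obtain ⟨lx, hcx, _, hlx⟩ := chainlist_suffix hchain hx
          exact mem_hatD.2 ⟨_, linked_of_chain hcx (hlC' x hx)
            (fun y hy => hlC' y (hlx y hy))⟩
        have hcard : l.length ≤ (hatD d C).card := by
          calc l.length = l.toFinset.card :=
                (List.toFinset_card_of_nodup (chainlist_nodup hchain)).symm
            _ ≤ _ := Finset.card_le_card hsub
        exact le_trans hdist (by exact_mod_cast hcard)
      · push_neg at hi
        refine le_trans hw ?_
        have hsub : hatD d (insert i C) ⊆ hatD d C := fun a ha => by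
          obtain ⟨g', hg'⟩ := mem_hatD.1 ha
          exact mem_hatD.2 ⟨g', linked_of_not_i hi hg'⟩
        exact_mod_cast Finset.card_le_card hsub
    · intro hw
      refine le_trans hw ?_
      have hsub : hatD d C ⊆ hatD d (insert i C) := fun a ha => by
        obtain ⟨g', hg'⟩ := mem_hatD.1 ha
        exact mem_hatD.2 ⟨g', linkedIn_mono (Finset.subset_insert i C) hg'⟩
      exact_mod_cast Finset.card_le_card hsub
  simp only [nuD, h1]

/-- A distant agent is a dummy: in a unit-weight liquid democracy election, if the
delegation distance from `i` to her guru `g` is at least the quota `β`, then `i`'s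
delegative Banzhaf index is 0. -/
theorem distant_agent_dummy {α : Type*} [Fintype α] [DecidableEq α]
    (β : ℝ) (d : α → Option α) (i g : α) (l : List α)
    (hchain : ChainList d i l g) (hdist : β ≤ (l.length : ℝ)) :
    DB (fun _ => (1 : ℝ)) β d i = 0 := by
  unfold DB banzhaf
  rw [Finset.sum_eq_zero, zero_div]
  intro C _
  rw [nuD_insert_eq hchain hdist C]
  simp
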